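/- arXiv:1112.3559 — 3 statements merged into one kernel-verified Lean document; each statement's English description precedes it below -/
import Mathlib

section
/- Let f : I → ℝ where I ⊆ ℝ is an interval, with f''' absolutely continuous on the interior I°, a, b ∈ I° with a < b, and f''' integrable on [a,b]. If |f'''| is a P-convex function on [a,b], then |∫_a^b f(x) dx − ((b−a)/6)·[f(a) + 4·f((a+b)/2) + f(b)]| ≤ ((b−a)^4/1152)·( |f'''(a)| + |f'''((a+b)/2)| + |f'''(b)| ). -/
open MeasureTheory Real Set

/-- A real function `g` is absolutely continuous on a set `s`. -/
def AbsolutelyContinuousOnReal (g : ℝ → ℝ) (s : Set ℝ) : Prop :=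
  ∀ ε > (0 : ℝ), ∃ δ > (0 : ℝ), ∀ (n : ℕ) (u v : Fin n → ℝ),
    (∀ i, u i < v i ∧ Set.Icc (u i) (v i) ⊆ s) →
    (Pairwise fun i j => Disjoint (Set.Ioo (u i) (v i)) (Set.Ioo (u j) (v j))) →
    (∑ i, (v i - u i)) < δ → (∑ i, |g (v i) - g (u i)|) < ε

/-- `g` is `P`-convex on the set `A`: for all `x, y ∈ A` and `t ∈ [0,1]`,
`g(tx + (1-t)y) ≤ g(x) + g(y)`. -/
def PConvexOn (A : Set ℝ) (g : ℝ → ℝ) : Prop :=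
  ∀ x ∈ A, ∀ y ∈ A, ∀ t ∈ Set.Icc (0 : ℝ) 1, g (t * x + (1 - t) * y) ≤ g x + g y

private lemma kernel_hasDeriv0 (p w x : ℝ) :
    HasDerivAt (fun y => (y - p) ^ 2 * (w - 2 * y) / 12) ((x - p) * (w + p - 3 * x) / 6) x := by
  have h1 : HasDerivAt (fun y : ℝ => (y - p) ^ 2) (2 * (x - p)) x := by
    simpa using ((hasDerivAt_id x).sub_const p).fun_pow 2
  have h2 : HasDerivAt (fun y : ℝ => w - 2 * y) (-2) x := by
    simpa using (hasDerivAt_const x w).fun_sub ((hasDerivAt_id x).const_mul 2)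
  have h := (h1.fun_mul h2).div_const 12
  refine h.congr_deriv ?_
  ring

private lemma kernel_hasDeriv1 (p w x : ℝ) :
    HasDerivAt (fun y => (y - p) * (w + p - 3 * y) / 6) ((w + 4 * p - 6 * x) / 6) x := by
  have h1 : HasDerivAt (fun y : ℝ => y - p) 1 x := (hasDerivAt_id x).sub_const p
  have h2 : HasDerivAt (fun y : ℝ => w + p - 3 * y) (-3) x := by
    simpa using (hasDerivAt_const x (w + p)).fun_sub ((hasDerivAt_id x).const_mul 3)
  have h := (h1.fun_mul h2).div_const 6
  refine h.congr_deriv ?_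
  ring

private lemma kernel_hasDeriv2 (p w x : ℝ) :
    HasDerivAt (fun y => (w + 4 * p - 6 * y) / 6) (-1 : ℝ) x := by
  have h2 : HasDerivAt (fun y : ℝ => w + 4 * p - 6 * y) (-6) x := by
    simpa using (hasDerivAt_const x (w + 4 * p)).fun_sub ((hasDerivAt_id x).const_mul 6)
  have h := h2.div_const 6
  refine h.congr_deriv ?_
  norm_num

private lemma triple_ibp (f : ℝ → ℝ) (s t p w : ℝ)
    (h1 : ∀ x ∈ Set.uIcc s t, HasDerivAt f (deriv f x) x)
    (h2 : ∀ x ∈ Set.uIcc s t, HasDerivAt (deriv f) (deriv (deriv f) x) x)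
    (h3 : ∀ x ∈ Set.uIcc s t, HasDerivAt (deriv (deriv f)) (deriv (deriv (deriv f)) x) x)
    (hi1 : IntervalIntegrable (deriv f) volume s t)
    (hi2 : IntervalIntegrable (deriv (deriv f)) volume s t)
    (hi3 : IntervalIntegrable (deriv (deriv (deriv f))) volume s t) :
    ∫ x in s..t, (x - p) ^ 2 * (w - 2 * x) / 12 * deriv (deriv (deriv f)) x =
      (t - p) ^ 2 * (w - 2 * t) / 12 * deriv (deriv f) t
        - (s - p) ^ 2 * (w - 2 * s) / 12 * deriv (deriv f) s
        - (t - p) * (w + p - 3 * t) / 6 * deriv f t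
        + (s - p) * (w + p - 3 * s) / 6 * deriv f s
        + (w + 4 * p - 6 * t) / 6 * f t - (w + 4 * p - 6 * s) / 6 * f s
        + ∫ x in s..t, f x := by
  have c0 : Continuous fun x : ℝ => (x - p) * (w + p - 3 * x) / 6 := by continuity
  have c1 : Continuous fun x : ℝ => (w + 4 * p - 6 * x) / 6 := by continuity
  have E1 := intervalIntegral.integral_mul_deriv_eq_deriv_mul
    (u := fun x => (x - p) ^ 2 * (w - 2 * x) / 12) (u' := fun x => (x - p) * (w + p - 3 * x) / 6)
    (v := deriv (deriv f)) (v' := deriv (deriv (deriv f)))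
    (fun x _ => kernel_hasDeriv0 p w x) h3 (c0.intervalIntegrable s t) hi3
  have E2 := intervalIntegral.integral_mul_deriv_eq_deriv_mul
    (u := fun x => (x - p) * (w + p - 3 * x) / 6) (u' := fun x => (w + 4 * p - 6 * x) / 6)
    (v := deriv f) (v' := deriv (deriv f))
    (fun x _ => kernel_hasDeriv1 p w x) h2 (c1.intervalIntegrable s t) hi2
  have E3 := intervalIntegral.integral_mul_deriv_eq_deriv_mul
    (u := fun x => (w + 4 * p - 6 * x) / 6) (u' := fun _ => (-1 : ℝ))
    (v := f) (v' := deriv f)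
    (fun x _ => kernel_hasDeriv2 p w x) h1 intervalIntegrable_const hi1
  have E4 : ∫ x in s..t, (-1 : ℝ) * f x = -∫ x in s..t, f x := by
    simp
  rw [E1, E2, E3, E4]
  ring

private lemma kernel_int_left (a b : ℝ) :
    ∫ x in a..(a + b) / 2, (x - a) ^ 2 * (a + b - 2 * x) / 12 = (b - a) ^ 4 / 1152 := by
  have hd : ∀ x ∈ Set.uIcc a ((a + b) / 2),
      HasDerivAt (fun y => ((b - a) * (y - a) ^ 3 / 3 - (y - a) ^ 4 / 2) / 12)
        ((x - a) ^ 2 * (a + b - 2 * x) / 12) x := by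
    intro x _
    have h3 : HasDerivAt (fun y : ℝ => (y - a) ^ 3) (3 * (x - a) ^ 2) x := by
      simpa using ((hasDerivAt_id x).sub_const a).fun_pow 3
    have h4 : HasDerivAt (fun y : ℝ => (y - a) ^ 4) (4 * (x - a) ^ 3) x := by
      simpa using ((hasDerivAt_id x).sub_const a).fun_pow 4
    have h := (((h3.const_mul (b - a)).div_const 3).fun_sub (h4.div_const 2)).div_const 12
    refine h.congr_deriv ?_
    ring
  have hc : Continuous fun x : ℝ => (x - a) ^ 2 * (a + b - 2 * x) / 12 := by continuity
  rw [intervalIntegral.integral_eq_sub_of_hasDerivAt hd (hc.intervalIntegrable _ _)]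
  ring

private lemma kernel_int_right (a b : ℝ) :
    ∫ x in ((a + b) / 2)..b, (x - b) ^ 2 * (2 * x - (a + b)) / 12 = (b - a) ^ 4 / 1152 := by
  have hd : ∀ x ∈ Set.uIcc ((a + b) / 2) b,
      HasDerivAt (fun y => -((b - a) * (b - y) ^ 3 / 3 - (b - y) ^ 4 / 2) / 12)
        ((x - b) ^ 2 * (2 * x - (a + b)) / 12) x := by
    intro x _
    have h3 : HasDerivAt (fun y : ℝ => (b - y) ^ 3) (3 * (b - x) ^ 2 * (-1)) x := by
      simpa using ((hasDerivAt_const x b).fun_sub (hasDerivAt_id x)).fun_pow 3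
    have h4 : HasDerivAt (fun y : ℝ => (b - y) ^ 4) (4 * (b - x) ^ 3 * (-1)) x := by
      simpa using ((hasDerivAt_const x b).fun_sub (hasDerivAt_id x)).fun_pow 4
    have h := ((((h3.const_mul (b - a)).div_const 3).fun_sub (h4.div_const 2)).fun_neg).div_const 12
    refine h.congr_deriv ?_
    ring
  have hc : Continuous fun x : ℝ => (x - b) ^ 2 * (2 * x - (a + b)) / 12 := by continuity
  rw [intervalIntegral.integral_eq_sub_of_hasDerivAt hd (hc.intervalIntegrable _ _)]
  ring

private lemma pconv_between {a b : ℝ} {g : ℝ → ℝ}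
    (hconv : PConvexOn (Set.Icc a b) g) {u v z : ℝ}
    (hu : u ∈ Set.Icc a b) (hv : v ∈ Set.Icc a b) (huv : u < v)
    (hz : z ∈ Set.Icc u v) : g z ≤ g u + g v := by
  have h0 : (0 : ℝ) < v - u := sub_pos.mpr huv
  have ht : (v - z) / (v - u) ∈ Set.Icc (0 : ℝ) 1 := by
    constructor
    · exact div_nonneg (sub_nonneg.mpr hz.2) h0.le
    · rw [div_le_one h0]
      linarith [hz.1]
  have heq : (v - z) / (v - u) * u + (1 - (v - z) / (v - u)) * v = z := by
    field_simp
    ring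
  have h := hconv u hu v hv _ ht
  rwa [heq] at h

private lemma opp_sign_bound {X Y p q r : ℝ} (hX : |X| ≤ p) (hY : |Y| ≤ q)
    (hpr : p ≤ r) (hqr : q ≤ r)
    (hs : 0 ≤ X ∧ Y ≤ 0 ∨ X ≤ 0 ∧ 0 ≤ Y) : |X + Y| ≤ r := by
  rcases abs_le.mp hX with ⟨hX1, hX2⟩
  rcases abs_le.mp hY with ⟨hY1, hY2⟩
  rw [abs_le]
  rcases hs with ⟨h1, h2⟩ | ⟨h1, h2⟩ <;> constructor <;> linarith

set_option maxHeartbeats 1000000 in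
theorem simpson_pconvex (I : Set ℝ) (hI : I.OrdConnected) (f : ℝ → ℝ)
    (a b : ℝ) (ha : a ∈ interior I) (hb : b ∈ interior I) (hab : a < b)
    (hd1 : ∀ x ∈ interior I, DifferentiableAt ℝ f x)
    (hd2 : ∀ x ∈ interior I, DifferentiableAt ℝ (deriv f) x)
    (hd3 : ∀ x ∈ interior I, DifferentiableAt ℝ (deriv (deriv f)) x)
    (hac : AbsolutelyContinuousOnReal (deriv (deriv (deriv f))) (interior I))
    (hint : IntegrableOn (deriv (deriv (deriv f))) (Set.Icc a b))
    (hconv : PConvexOn (Set.Icc a b) fun x => |deriv (deriv (deriv f)) x|) :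
    |(∫ x in a..b, f x) - (b - a) / 6 * (f a + 4 * f ((a + b) / 2) + f b)| ≤
      (b - a) ^ 4 / 1152 *
        (|deriv (deriv (deriv f)) a| + |deriv (deriv (deriv f)) ((a + b) / 2)| +
          |deriv (deriv (deriv f)) b|) := by
  have hIcc : Set.Icc a b ⊆ interior I := hI.interior.out ha hb
  have hacm : a < (a + b) / 2 := by linarith
  have hmb : (a + b) / 2 < b := by linarith
  have hsub1 : Set.uIcc a ((a + b) / 2) ⊆ Set.Icc a b := by
    rw [Set.uIcc_of_le hacm.le]
    exact Set.Icc_subset_Icc le_rfl hmb.le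
  have hsub2 : Set.uIcc ((a + b) / 2) b ⊆ Set.Icc a b := by
    rw [Set.uIcc_of_le hmb.le]
    exact Set.Icc_subset_Icc hacm.le le_rfl
  have hD1 : ∀ x ∈ Set.Icc a b, HasDerivAt f (deriv f x) x :=
    fun x hx => (hd1 x (hIcc hx)).hasDerivAt
  have hD2 : ∀ x ∈ Set.Icc a b, HasDerivAt (deriv f) (deriv (deriv f) x) x :=
    fun x hx => (hd2 x (hIcc hx)).hasDerivAt
  have hD3 : ∀ x ∈ Set.Icc a b, HasDerivAt (deriv (deriv f)) (deriv (deriv (deriv f)) x) x :=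
    fun x hx => (hd3 x (hIcc hx)).hasDerivAt
  have hC0 : ContinuousOn f (Set.Icc a b) :=
    fun x hx => ((hd1 x (hIcc hx)).continuousAt).continuousWithinAt
  have hC1 : ContinuousOn (deriv f) (Set.Icc a b) :=
    fun x hx => ((hd2 x (hIcc hx)).continuousAt).continuousWithinAt
  have hC2 : ContinuousOn (deriv (deriv f)) (Set.Icc a b) :=
    fun x hx => ((hd3 x (hIcc hx)).continuousAt).continuousWithinAt
  -- continuity of the third derivative, from absolute continuity
  have hC3' : ∀ p ∈ interior I, ContinuousAt (deriv (deriv (deriv f))) p := by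
    intro p hp
    rw [Metric.continuousAt_iff]
    intro ε hε
    obtain ⟨δ, hδ, hδ2⟩ := hac ε hε
    obtain ⟨r, hr, hball⟩ := Metric.isOpen_iff.mp isOpen_interior p hp
    refine ⟨min δ r, lt_min hδ hr, ?_⟩
    intro y hy
    rcases eq_or_ne y p with rfl | hne
    · simpa using hε
    · have huv : min y p < max y p := min_lt_max.mpr hne
      have hyd : |y - p| < δ := by
        have h := lt_of_lt_of_le hy (min_le_left _ _)
        rwa [Real.dist_eq] at h
      have hyr : |y - p| < r := by
        have h := lt_of_lt_of_le hy (min_le_right _ _)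
        rwa [Real.dist_eq] at h
      have hvu : max y p - min y p < δ := by
        rw [max_sub_min_eq_abs]
        rwa [abs_sub_comm]
      have hIuv : Set.Icc (min y p) (max y p) ⊆ interior I := by
        intro z hz
        apply hball
        rw [Metric.mem_ball, Real.dist_eq, abs_lt]
        rw [abs_lt] at hyr
        have h1 : p - r < min y p := lt_min (by linarith) (by linarith)
        have h2 : max y p < p + r := max_lt (by linarith) (by linarith)
        constructor <;> [linarith [hz.1]; linarith [hz.2]]
      have key := hδ2 1 (fun _ => min y p) (fun _ => max y p)
        (fun _ => ⟨huv, hIuv⟩) (Subsingleton.pairwise) (by simpa using hvu)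
      simp only [Fin.sum_univ_one] at key
      rw [Real.dist_eq]
      rcases le_total y p with h | h
      · rw [min_eq_left h, max_eq_right h] at key
        rwa [abs_sub_comm]
      · rwa [min_eq_right h, max_eq_left h] at key
  have hC3 : ContinuousOn (deriv (deriv (deriv f))) (Set.Icc a b) :=
    fun x hx => (hC3' x (hIcc hx)).continuousWithinAt
  -- interval integrability on the two halves
  have if0l : IntervalIntegrable f volume a ((a + b) / 2) :=
    (hC0.mono hsub1).intervalIntegrable
  have if0r : IntervalIntegrable f volume ((a + b) / 2) b :=
    (hC0.mono hsub2).intervalIntegrable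
  have if1l : IntervalIntegrable (deriv f) volume a ((a + b) / 2) :=
    (hC1.mono hsub1).intervalIntegrable
  have if1r : IntervalIntegrable (deriv f) volume ((a + b) / 2) b :=
    (hC1.mono hsub2).intervalIntegrable
  have if2l : IntervalIntegrable (deriv (deriv f)) volume a ((a + b) / 2) :=
    (hC2.mono hsub1).intervalIntegrable
  have if2r : IntervalIntegrable (deriv (deriv f)) volume ((a + b) / 2) b :=
    (hC2.mono hsub2).intervalIntegrable
  have if3l : IntervalIntegrable (deriv (deriv (deriv f))) volume a ((a + b) / 2) :=
    (hC3.mono hsub1).intervalIntegrable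
  have if3r : IntervalIntegrable (deriv (deriv (deriv f))) volume ((a + b) / 2) b :=
    (hC3.mono hsub2).intervalIntegrable
  -- the two integration-by-parts identities
  have Hab1 := triple_ibp f a ((a + b) / 2) a (a + b)
    (fun x hx => hD1 x (hsub1 hx)) (fun x hx => hD2 x (hsub1 hx))
    (fun x hx => hD3 x (hsub1 hx)) if1l if2l if3l
  have Hab2 := triple_ibp f ((a + b) / 2) b b (a + b)
    (fun x hx => hD1 x (hsub2 hx)) (fun x hx => hD2 x (hsub2 hx))
    (fun x hx => hD3 x (hsub2 hx)) if1r if2r if3r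
  have hadd := intervalIntegral.integral_add_adjacent_intervals if0l if0r
  have key : (∫ x in a..b, f x) - (b - a) / 6 * (f a + 4 * f ((a + b) / 2) + f b)
      = (∫ x in a..(a + b) / 2,
            (x - a) ^ 2 * (a + b - 2 * x) / 12 * deriv (deriv (deriv f)) x)
        + ∫ x in ((a + b) / 2)..b,
            (x - b) ^ 2 * (a + b - 2 * x) / 12 * deriv (deriv (deriv f)) x := by
    rw [Hab1, Hab2, ← hadd]
    ring
  rw [key]
  -- abbreviations
  have hK1 := kernel_int_left a b
  have hK2 := kernel_int_right a b
  have hCnn : (0 : ℝ) ≤ (b - a) ^ 4 / 1152 := by positivity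
  -- integrability of the two integrands
  have hkcl : Continuous fun x : ℝ => (x - a) ^ 2 * (a + b - 2 * x) / 12 := by fun_prop
  have hkcr : Continuous fun x : ℝ => (x - b) ^ 2 * (a + b - 2 * x) / 12 := by fun_prop
  have hkcr' : Continuous fun x : ℝ => (x - b) ^ 2 * (2 * x - (a + b)) / 12 := by fun_prop
  have Xint : IntervalIntegrable
      (fun x => (x - a) ^ 2 * (a + b - 2 * x) / 12 * deriv (deriv (deriv f)) x)
      volume a ((a + b) / 2) := if3l.continuousOn_mul hkcl.continuousOn
  have Yint : IntervalIntegrable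
      (fun x => (x - b) ^ 2 * (a + b - 2 * x) / 12 * deriv (deriv (deriv f)) x)
      volume ((a + b) / 2) b := if3r.continuousOn_mul hkcr.continuousOn
  have Yint' : IntervalIntegrable
      (fun x => (x - b) ^ 2 * (2 * x - (a + b)) / 12 * deriv (deriv (deriv f)) x)
      volume ((a + b) / 2) b := if3r.continuousOn_mul hkcr'.continuousOn
  -- kernel signs
  have hkl_nn : ∀ x ∈ Set.Icc a ((a + b) / 2), 0 ≤ (x - a) ^ 2 * (a + b - 2 * x) / 12 := by
    intro x hx
    have h1 : 0 ≤ a + b - 2 * x := by linarith [hx.2]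
    positivity
  have hkr_nn : ∀ x ∈ Set.Icc ((a + b) / 2) b, 0 ≤ (x - b) ^ 2 * (2 * x - (a + b)) / 12 := by
    intro x hx
    have h1 : 0 ≤ 2 * x - (a + b) := by linarith [hx.1]
    positivity
  -- generic bound for the left half
  have absX : ∀ K : ℝ, (∀ x ∈ Set.Icc a ((a + b) / 2), |deriv (deriv (deriv f)) x| ≤ K) →
      |∫ x in a..(a + b) / 2,
          (x - a) ^ 2 * (a + b - 2 * x) / 12 * deriv (deriv (deriv f)) x|
        ≤ (b - a) ^ 4 / 1152 * K := by
    intro K hK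
    have h1 := intervalIntegral.abs_integral_le_integral_abs (μ := volume) hacm.le
      (f := fun x => (x - a) ^ 2 * (a + b - 2 * x) / 12 * deriv (deriv (deriv f)) x)
    have h2 : (∫ x in a..(a + b) / 2,
          |(x - a) ^ 2 * (a + b - 2 * x) / 12 * deriv (deriv (deriv f)) x|)
        ≤ ∫ x in a..(a + b) / 2, (x - a) ^ 2 * (a + b - 2 * x) / 12 * K := by
      apply intervalIntegral.integral_mono_on hacm.le Xint.abs
        ((hkcl.mul continuous_const).intervalIntegrable _ _)
      intro x hx
      rw [abs_mul, abs_of_nonneg (hkl_nn x hx)]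
      exact mul_le_mul_of_nonneg_left (hK x hx) (hkl_nn x hx)
    rw [intervalIntegral.integral_mul_const, hK1] at h2
    exact le_trans h1 h2
  -- generic bound for the right half
  have absY : ∀ K : ℝ, (∀ x ∈ Set.Icc ((a + b) / 2) b, |deriv (deriv (deriv f)) x| ≤ K) →
      |∫ x in ((a + b) / 2)..b,
          (x - b) ^ 2 * (a + b - 2 * x) / 12 * deriv (deriv (deriv f)) x|
        ≤ (b - a) ^ 4 / 1152 * K := by
    intro K hK
    have h1 := intervalIntegral.abs_integral_le_integral_abs (μ := volume) hmb.le
      (f := fun x => (x - b) ^ 2 * (a + b - 2 * x) / 12 * deriv (deriv (deriv f)) x)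
    have h2 : (∫ x in ((a + b) / 2)..b,
          |(x - b) ^ 2 * (a + b - 2 * x) / 12 * deriv (deriv (deriv f)) x|)
        ≤ ∫ x in ((a + b) / 2)..b, (x - b) ^ 2 * (2 * x - (a + b)) / 12 * K := by
      apply intervalIntegral.integral_mono_on hmb.le Yint.abs
        ((hkcr'.mul continuous_const).intervalIntegrable _ _)
      intro x hx
      rw [abs_mul]
      have hke : |(x - b) ^ 2 * (a + b - 2 * x) / 12|
          = (x - b) ^ 2 * (2 * x - (a + b)) / 12 := by
        rw [abs_of_nonpos (by nlinarith [sq_nonneg (x - b), hx.1] :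
          (x - b) ^ 2 * (a + b - 2 * x) / 12 ≤ 0)]
        ring
      rw [hke]
      exact mul_le_mul_of_nonneg_left (hK x hx) (hkr_nn x hx)
    rw [intervalIntegral.integral_mul_const, hK2] at h2
    exact le_trans h1 h2
  -- pointwise P-convexity bounds
  have hmemA : a ∈ Set.Icc a b := ⟨le_rfl, hab.le⟩
  have hmemM : (a + b) / 2 ∈ Set.Icc a b := ⟨hacm.le, hmb.le⟩
  have hmemB : b ∈ Set.Icc a b := ⟨hab.le, le_rfl⟩
  have hbl : ∀ x ∈ Set.Icc a ((a + b) / 2), |deriv (deriv (deriv f)) x|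
      ≤ |deriv (deriv (deriv f)) a| + |deriv (deriv (deriv f)) ((a + b) / 2)| :=
    fun x hx => pconv_between hconv hmemA hmemM hacm hx
  have hbr : ∀ x ∈ Set.Icc ((a + b) / 2) b, |deriv (deriv (deriv f)) x|
      ≤ |deriv (deriv (deriv f)) ((a + b) / 2)| + |deriv (deriv (deriv f)) b| :=
    fun x hx => pconv_between hconv hmemM hmemB hmb hx
  have hXle := absX _ hbl
  have hYle := absY _ hbr
  have hAnn : (0 : ℝ) ≤ |deriv (deriv (deriv f)) a| := abs_nonneg _
  have hMnn : (0 : ℝ) ≤ |deriv (deriv (deriv f)) ((a + b) / 2)| := abs_nonneg _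
  have hBnn : (0 : ℝ) ≤ |deriv (deriv (deriv f)) b| := abs_nonneg _
  by_cases hzero : ∃ p ∈ Set.Icc a b, deriv (deriv (deriv f)) p = 0
  · obtain ⟨p, hp, hp0⟩ := hzero
    rcases le_total p ((a + b) / 2) with hpc | hpc
    · -- zero in the left half: |f'''| ≤ |f''' b| on the right half
      have hright : ∀ x ∈ Set.Icc ((a + b) / 2) b, |deriv (deriv (deriv f)) x|
          ≤ |deriv (deriv (deriv f)) b| := by
        intro x hx
        have hpb : p < b := lt_of_le_of_lt hpc hmb
        have h := pconv_between hconv ⟨hp.1, hp.2⟩ hmemB hpb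
          (⟨le_trans hpc hx.1, hx.2⟩ : x ∈ Set.Icc p b)
        rw [hp0] at h
        simpa using h
      have hY2 := absY _ hright
      calc |_ + _| ≤ _ + _ := abs_add_le _ _
        _ ≤ (b - a) ^ 4 / 1152 *
              (|deriv (deriv (deriv f)) a| + |deriv (deriv (deriv f)) ((a + b) / 2)|)
            + (b - a) ^ 4 / 1152 * |deriv (deriv (deriv f)) b| := add_le_add hXle hY2
        _ = _ := by ring
    · -- zero in the right half: |f'''| ≤ |f''' a| on the left half
      have hleft : ∀ x ∈ Set.Icc a ((a + b) / 2), |deriv (deriv (deriv f)) x|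
          ≤ |deriv (deriv (deriv f)) a| := by
        intro x hx
        have hap : a < p := lt_of_lt_of_le hacm hpc
        have h := pconv_between hconv hmemA ⟨hp.1, hp.2⟩ hap
          (⟨hx.1, le_trans hx.2 hpc⟩ : x ∈ Set.Icc a p)
        rw [hp0] at h
        simpa using h
      have hX2 := absX _ hleft
      calc |_ + _| ≤ _ + _ := abs_add_le _ _
        _ ≤ (b - a) ^ 4 / 1152 * |deriv (deriv (deriv f)) a|
            + (b - a) ^ 4 / 1152 *
              (|deriv (deriv (deriv f)) ((a + b) / 2)| + |deriv (deriv (deriv f)) b|) :=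
          add_le_add hX2 hYle
        _ = _ := by ring
  · -- no zero: f''' has constant sign
    push_neg at hzero
    have hsign : (∀ x ∈ Set.Icc a b, 0 < deriv (deriv (deriv f)) x)
        ∨ (∀ x ∈ Set.Icc a b, deriv (deriv (deriv f)) x < 0) := by
      rcases (hzero a hmemA).lt_or_gt with hneg | hpos
      · right
        intro x hx
        by_contra hge
        push_neg at hge
        have hlt : 0 < deriv (deriv (deriv f)) x := lt_of_le_of_ne hge (Ne.symm (hzero x hx))
        have hsub : Set.uIcc a x ⊆ Set.Icc a b := by
          rw [Set.uIcc_of_le hx.1]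
          exact Set.Icc_subset_Icc le_rfl hx.2
        obtain ⟨q, hq, hq0⟩ := intermediate_value_uIcc (hC3.mono hsub)
          (Set.mem_uIcc.mpr (Or.inl ⟨hneg.le, hlt.le⟩))
        exact hzero q (hsub hq) hq0
      · left
        intro x hx
        by_contra hge
        push_neg at hge
        have hlt : deriv (deriv (deriv f)) x < 0 := lt_of_le_of_ne hge (hzero x hx)
        have hsub : Set.uIcc a x ⊆ Set.Icc a b := by
          rw [Set.uIcc_of_le hx.1]
          exact Set.Icc_subset_Icc le_rfl hx.2
        obtain ⟨q, hq, hq0⟩ := intermediate_value_uIcc (hC3.mono hsub)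
          (Set.mem_uIcc.mpr (Or.inr ⟨hlt.le, hpos.le⟩))
        exact hzero q (hsub hq) hq0
    -- relation between Y and its positive-kernel version
    have hYY : (∫ x in ((a + b) / 2)..b,
          (x - b) ^ 2 * (a + b - 2 * x) / 12 * deriv (deriv (deriv f)) x)
        = -∫ x in ((a + b) / 2)..b,
            (x - b) ^ 2 * (2 * x - (a + b)) / 12 * deriv (deriv (deriv f)) x := by
      rw [← intervalIntegral.integral_neg]
      apply intervalIntegral.integral_congr
      intro x _
      ring
    rcases hsign with hpos | hneg
    · -- f''' > 0 : X ≥ 0, Y ≤ 0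
      have hXnn : 0 ≤ ∫ x in a..(a + b) / 2,
          (x - a) ^ 2 * (a + b - 2 * x) / 12 * deriv (deriv (deriv f)) x := by
        apply intervalIntegral.integral_nonneg hacm.le
        intro x hx
        exact mul_nonneg (hkl_nn x hx) (hpos x (hsub1 (by rwa [Set.uIcc_of_le hacm.le]))).le
      have hYnp : (∫ x in ((a + b) / 2)..b,
          (x - b) ^ 2 * (a + b - 2 * x) / 12 * deriv (deriv (deriv f)) x) ≤ 0 := by
        rw [hYY, neg_nonpos]
        apply intervalIntegral.integral_nonneg hmb.le
        intro x hx
        exact mul_nonneg (hkr_nn x hx) (hpos x (hsub2 (by rwa [Set.uIcc_of_le hmb.le]))).le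
      exact opp_sign_bound hXle hYle
        (mul_le_mul_of_nonneg_left (by linarith) hCnn)
        (mul_le_mul_of_nonneg_left (by linarith) hCnn)
        (Or.inl ⟨hXnn, hYnp⟩)
    · -- f''' < 0 : X ≤ 0, Y ≥ 0
      have hXnp : (∫ x in a..(a + b) / 2,
          (x - a) ^ 2 * (a + b - 2 * x) / 12 * deriv (deriv (deriv f)) x) ≤ 0 := by
        have h0 : (∫ x in a..(a + b) / 2,
            (x - a) ^ 2 * (a + b - 2 * x) / 12 * deriv (deriv (deriv f)) x)
            = -∫ x in a..(a + b) / 2,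
            (x - a) ^ 2 * (a + b - 2 * x) / 12 * (-deriv (deriv (deriv f)) x) := by
          rw [← intervalIntegral.integral_neg]
          apply intervalIntegral.integral_congr
          intro x _
          ring
        rw [h0, neg_nonpos]
        apply intervalIntegral.integral_nonneg hacm.le
        intro x hx
        have := hneg x (hsub1 (by rwa [Set.uIcc_of_le hacm.le]))
        exact mul_nonneg (hkl_nn x hx) (by linarith)
      have hYnn : 0 ≤ ∫ x in ((a + b) / 2)..b,
          (x - b) ^ 2 * (a + b - 2 * x) / 12 * deriv (deriv (deriv f)) x := by
        have h0 : (∫ x in ((a + b) / 2)..b,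
            (x - b) ^ 2 * (a + b - 2 * x) / 12 * deriv (deriv (deriv f)) x)
            = ∫ x in ((a + b) / 2)..b,
            (x - b) ^ 2 * (2 * x - (a + b)) / 12 * (-deriv (deriv (deriv f)) x) := by
          apply intervalIntegral.integral_congr
          intro x _
          ring
        rw [h0]
        apply intervalIntegral.integral_nonneg hmb.le
        intro x hx
        have := hneg x (hsub2 (by rwa [Set.uIcc_of_le hmb.le]))
        exact mul_nonneg (hkr_nn x hx) (by linarith)
      exact opp_sign_bound hXle hYle
        (mul_le_mul_of_nonneg_left (by linarith) hCnn)
        (mul_le_mul_of_nonneg_left (by linarith) hCnn)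
        (Or.inr ⟨hXnp, hYnn⟩)
end

section
/- Let f : I → ℝ where I ⊆ ℝ is an interval, with f''' absolutely continuous on the interior I°, a, b ∈ I° with a < b, and f''' integrable on [a,b]. Suppose |f'''| is a P-convex function on [a,b] and f'''((a+b)/2) = 0. Then |∫_a^b f(x) dx − ((b−a)/6)·[f(a) + 4·f((a+b)/2) + f(b)]| ≤ ((b−a)^4/1152)·( |f'''(a)| + |f'''(b)| ). -/
open MeasureTheory Real Set
set_option maxHeartbeats 1000000

/-- Triple integration by parts against a kernel with derivatives everywhere. -/
lemma triple_ibp_s10 {f F1 F2 F3 K K1 K2 K3 : ℝ → ℝ} {c d : ℝ} (hcd : c ≤ d)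
    (hf : ∀ x ∈ Icc c d, HasDerivAt f (F1 x) x)
    (hf1 : ∀ x ∈ Icc c d, HasDerivAt F1 (F2 x) x)
    (hf2 : ∀ x ∈ Icc c d, HasDerivAt F2 (F3 x) x)
    (hK : ∀ x, HasDerivAt K (K1 x) x)
    (hK1 : ∀ x, HasDerivAt K1 (K2 x) x)
    (hK2 : ∀ x, HasDerivAt K2 (K3 x) x)
    (hcK3 : Continuous K3)
    (hi3 : IntervalIntegrable F3 volume c d) :
    ∫ x in c..d, K x * F3 x =
      K d * F2 d - K c * F2 c - (K1 d * F1 d - K1 c * F1 c)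
      + (K2 d * f d - K2 c * f c) - ∫ x in c..d, K3 x * f x := by
  have huIcc : (Set.uIcc c d) = Icc c d := uIcc_of_le hcd
  have hIoo : Ioo (min c d) (max c d) ⊆ Icc c d := by
    rw [min_eq_left hcd, max_eq_right hcd]; exact Ioo_subset_Icc_self
  have hcf : ContinuousOn f (Set.uIcc c d) := by
    rw [huIcc]; exact fun x hx => ((hf x hx).continuousAt).continuousWithinAt
  have hcf1 : ContinuousOn F1 (Set.uIcc c d) := by
    rw [huIcc]; exact fun x hx => ((hf1 x hx).continuousAt).continuousWithinAt
  have hcf2 : ContinuousOn F2 (Set.uIcc c d) := by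
    rw [huIcc]; exact fun x hx => ((hf2 x hx).continuousAt).continuousWithinAt
  have hif1 : IntervalIntegrable F1 volume c d := hcf1.intervalIntegrable
  have hcK : Continuous K := continuous_iff_continuousAt.mpr fun x => (hK x).continuousAt
  have hcK1 : Continuous K1 := continuous_iff_continuousAt.mpr fun x => (hK1 x).continuousAt
  have hcK2 : Continuous K2 := continuous_iff_continuousAt.mpr fun x => (hK2 x).continuousAt
  have eq1 := intervalIntegral.integral_mul_deriv_eq_deriv_mul_of_hasDerivAt (u := K) (v := F2)
    (u' := K1) (v' := F3) hcK.continuousOn hcf2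
    (fun x hx => hK x) (fun x hx => hf2 x (hIoo hx))
    (hcK1.intervalIntegrable c d) hi3
  have eq2 := intervalIntegral.integral_mul_deriv_eq_deriv_mul_of_hasDerivAt (u := K1) (v := F1)
    (u' := K2) (v' := F2) hcK1.continuousOn hcf1
    (fun x hx => hK1 x) (fun x hx => hf1 x (hIoo hx))
    (hcK2.intervalIntegrable c d) hcf2.intervalIntegrable
  have eq3 := intervalIntegral.integral_mul_deriv_eq_deriv_mul_of_hasDerivAt (u := K2) (v := f)
    (u' := K3) (v' := F1) hcK2.continuousOn hcf
    (fun x hx => hK2 x) (fun x hx => hf x (hIoo hx))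
    (hcK3.intervalIntegrable c d) hif1
  rw [eq1, eq2, eq3]; ring

theorem simpson_pconvex_midpoint_zero (I : Set ℝ) (hI : I.OrdConnected) (f : ℝ → ℝ)
    (a b : ℝ) (ha : a ∈ interior I) (hb : b ∈ interior I) (hab : a < b)
    (hd1 : ∀ x ∈ interior I, DifferentiableAt ℝ f x)
    (hd2 : ∀ x ∈ interior I, DifferentiableAt ℝ (deriv f) x)
    (hd3 : ∀ x ∈ interior I, DifferentiableAt ℝ (deriv (deriv f)) x)
    (hac : AbsolutelyContinuousOnReal (deriv (deriv (deriv f))) (interior I))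
    (hint : IntegrableOn (deriv (deriv (deriv f))) (Set.Icc a b))
    (hconv : PConvexOn (Set.Icc a b) fun x => |deriv (deriv (deriv f)) x|)
    (hmid : deriv (deriv (deriv f)) ((a + b) / 2) = 0) :
    |(∫ x in a..b, f x) - (b - a) / 6 * (f a + 4 * f ((a + b) / 2) + f b)| ≤
      (b - a) ^ 4 / 1152 *
        (|deriv (deriv (deriv f)) a| + |deriv (deriv (deriv f)) b|) := by
  set F1 := deriv f with hF1d
  set F2 := deriv F1 with hF2d
  set F3 := deriv F2 with hF3d
  set m := (a + b) / 2 with hmdef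
  have ham : a < m := by rw [hmdef]; linarith
  have hmb : m < b := by rw [hmdef]; linarith
  -- [a,b] ⊆ interior I
  have hsub : Icc a b ⊆ interior I := by
    intro x hx
    rcases eq_or_lt_of_le hx.1 with h | h
    · exact h ▸ ha
    rcases eq_or_lt_of_le hx.2 with h' | h'
    · rw [h']; exact hb
    · have hIoo : Ioo a b ⊆ I := fun y hy =>
        hI.out (interior_subset ha) (interior_subset hb) ⟨hy.1.le, hy.2.le⟩
      exact interior_maximal hIoo isOpen_Ioo ⟨h, h'⟩
  have hdf : ∀ x ∈ Icc a b, HasDerivAt f (F1 x) x := fun x hx => (hd1 x (hsub hx)).hasDerivAt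
  have hdf1 : ∀ x ∈ Icc a b, HasDerivAt F1 (F2 x) x := fun x hx => (hd2 x (hsub hx)).hasDerivAt
  have hdf2 : ∀ x ∈ Icc a b, HasDerivAt F2 (F3 x) x := fun x hx => (hd3 x (hsub hx)).hasDerivAt
  have hIccL : Icc a m ⊆ Icc a b := Icc_subset_Icc le_rfl hmb.le
  have hIccR : Icc m b ⊆ Icc a b := Icc_subset_Icc ham.le le_rfl
  have hi3L : IntervalIntegrable F3 volume a m :=
    (intervalIntegrable_iff_integrableOn_Icc_of_le ham.le).mpr (hint.mono_set hIccL)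
  have hi3R : IntervalIntegrable F3 volume m b :=
    (intervalIntegrable_iff_integrableOn_Icc_of_le hmb.le).mpr (hint.mono_set hIccR)
  -- left kernel derivatives
  have hKa : ∀ x : ℝ, HasDerivAt (fun y => (y-a)^2*(a+b-2*y)/12) ((x-a)*(2*a+b-3*x)/6) x := by
    intro x
    have h := ((((hasDerivAt_id x).sub_const a).pow 2).mul
      (((hasDerivAt_id x).const_mul (2:ℝ)).const_sub (a+b))).div_const 12
    simp only [id_eq, Pi.pow_apply, Pi.mul_apply] at h; exact h.congr_deriv (by ring)
  have hKa1 : ∀ x : ℝ, HasDerivAt (fun y => (y-a)*(2*a+b-3*y)/6) ((5*a+b-6*x)/6) x := by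
    intro x
    have h := (((hasDerivAt_id x).sub_const a).mul
      (((hasDerivAt_id x).const_mul (3:ℝ)).const_sub (2*a+b))).div_const 6
    simp only [id_eq] at h; exact h.congr_deriv (by ring)
  have hKa2 : ∀ x : ℝ, HasDerivAt (fun y => (5*a+b-6*y)/6) (-1:ℝ) x := by
    intro x
    have h := (((hasDerivAt_id x).const_mul (6:ℝ)).const_sub (5*a+b)).div_const 6
    simp only [id_eq] at h; exact h.congr_deriv (by ring)
  -- right kernel derivatives
  have hKb : ∀ x : ℝ, HasDerivAt (fun y => (b-y)^2*(a+b-2*y)/12) ((b-x)*(3*x-(a+2*b))/6) x := by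
    intro x
    have h := ((((hasDerivAt_id x).const_sub b).pow 2).mul
      (((hasDerivAt_id x).const_mul (2:ℝ)).const_sub (a+b))).div_const 12
    simp only [id_eq, Pi.pow_apply, Pi.mul_apply] at h; exact h.congr_deriv (by ring)
  have hKb1 : ∀ x : ℝ, HasDerivAt (fun y => (b-y)*(3*y-(a+2*b))/6) ((a+5*b-6*x)/6) x := by
    intro x
    have h := (((hasDerivAt_id x).const_sub b).mul
      ((((hasDerivAt_id x).const_mul (3:ℝ)).sub_const (a+2*b)))).div_const 6
    simp only [id_eq] at h; exact h.congr_deriv (by ring)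
  have hKb2 : ∀ x : ℝ, HasDerivAt (fun y => (a+5*b-6*y)/6) (-1:ℝ) x := by
    intro x
    have h := (((hasDerivAt_id x).const_mul (6:ℝ)).const_sub (a+5*b)).div_const 6
    simp only [id_eq] at h; exact h.congr_deriv (by ring)
  -- the two integration-by-parts identities
  have eqL := triple_ibp_s10 (f := f) (F1 := F1) (F2 := F2) (F3 := F3) ham.le
    (fun x hx => hdf x (hIccL hx)) (fun x hx => hdf1 x (hIccL hx))
    (fun x hx => hdf2 x (hIccL hx)) hKa hKa1 hKa2 (by continuity) hi3L
  have eqR := triple_ibp_s10 (f := f) (F1 := F1) (F2 := F2) (F3 := F3) hmb.le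
    (fun x hx => hdf x (hIccR hx)) (fun x hx => hdf1 x (hIccR hx))
    (fun x hx => hdf2 x (hIccR hx)) hKb hKb1 hKb2 (by continuity) hi3R
  simp only [neg_one_mul, intervalIntegral.integral_neg] at eqL eqR
  -- split the integral of f
  have hcf : ContinuousOn f (Icc a b) := fun x hx => ((hdf x hx).continuousAt).continuousWithinAt
  have hifL : IntervalIntegrable f volume a m := by
    apply ContinuousOn.intervalIntegrable
    rw [uIcc_of_le ham.le]; exact hcf.mono hIccL
  have hifR : IntervalIntegrable f volume m b := by
    apply ContinuousOn.intervalIntegrable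
    rw [uIcc_of_le hmb.le]; exact hcf.mono hIccR
  have hsplit : (∫ x in a..m, f x) + ∫ x in m..b, f x = ∫ x in a..b, f x :=
    intervalIntegral.integral_add_adjacent_intervals hifL hifR
  -- key identity
  have key : (∫ x in a..b, f x) - (b - a) / 6 * (f a + 4 * f m + f b)
      = (∫ x in a..m, (x-a)^2*(a+b-2*x)/12 * F3 x)
        + ∫ x in m..b, (b-x)^2*(a+b-2*x)/12 * F3 x := by
    rw [hmdef] at eqL eqR ⊢
    linear_combination (-1 : ℝ) * eqL - eqR - hsplit
  -- pointwise bounds from P-convexity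
  have hA : ∀ t ∈ Icc a m, |F3 t| ≤ |F3 a| := by
    intro t ht
    have hden : (0:ℝ) < m - a := by linarith
    have hne : m - a ≠ 0 := ne_of_gt hden
    have hs0 : 0 ≤ (m - t) / (m - a) := div_nonneg (by linarith [ht.2]) hden.le
    have hs1 : (m - t) / (m - a) ≤ 1 := by rw [div_le_one hden]; linarith [ht.1]
    have harg : (m - t) / (m - a) * a + (1 - (m - t) / (m - a)) * m = t := by
      field_simp
      ring
    have h := hconv a ⟨le_refl a, hab.le⟩ m ⟨ham.le, hmb.le⟩ ((m - t) / (m - a)) ⟨hs0, hs1⟩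
    simp only [harg, hmid, abs_zero, add_zero] at h
    exact h
  have hB : ∀ t ∈ Icc m b, |F3 t| ≤ |F3 b| := by
    intro t ht
    have hden : (0:ℝ) < b - m := by linarith
    have hne : b - m ≠ 0 := ne_of_gt hden
    have hs0 : 0 ≤ (t - m) / (b - m) := div_nonneg (by linarith [ht.1]) hden.le
    have hs1 : (t - m) / (b - m) ≤ 1 := by rw [div_le_one hden]; linarith [ht.2]
    have harg : (t - m) / (b - m) * b + (1 - (t - m) / (b - m)) * m = t := by
      field_simp
      ring
    have h := hconv b ⟨hab.le, le_refl b⟩ m ⟨ham.le, hmb.le⟩ ((t - m) / (b - m)) ⟨hs0, hs1⟩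
    simp only [harg, hmid, abs_zero, add_zero] at h
    exact h
  -- kernel sign facts
  have hKnnL : ∀ t ∈ Icc a m, 0 ≤ (t-a)^2*(a+b-2*t)/12 := by
    intro t ht
    have h2 := ht.2
    rw [hmdef] at h2
    exact div_nonneg (mul_nonneg (sq_nonneg _) (by linarith)) (by norm_num)
  have hKnpR : ∀ t ∈ Icc m b, (b-t)^2*(a+b-2*t)/12 ≤ 0 := by
    intro t ht
    have h1 := ht.1
    rw [hmdef] at h1
    have : a + b - 2*t ≤ 0 := by linarith
    have := mul_nonpos_of_nonneg_of_nonpos (sq_nonneg (b-t)) this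
    linarith
  -- exact values of the kernel integrals
  have hvalL : ∫ x in a..m, (x-a)^2*(a+b-2*x)/12 = (b-a)^4/1152 := by
    rw [hmdef]
    have h : ∀ x ∈ uIcc a ((a+b)/2),
        HasDerivAt (fun y => (b-a)*(y-a)^3/36 - (y-a)^4/24) ((x-a)^2*(a+b-2*x)/12) x := by
      intro x _
      have h := (((((hasDerivAt_id x).sub_const a).pow 3).const_mul (b-a)).div_const 36).sub
        ((((hasDerivAt_id x).sub_const a).pow 4).div_const 24)
      simp only [id_eq] at h; exact h.congr_deriv (by ring)
    rw [intervalIntegral.integral_eq_sub_of_hasDerivAt h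
      (by apply ContinuousOn.intervalIntegrable; fun_prop)]
    ring
  have hvalR : ∫ x in m..b, -((b-x)^2*(a+b-2*x)/12) = (b-a)^4/1152 := by
    rw [hmdef]
    have h : ∀ x ∈ uIcc ((a+b)/2) b,
        HasDerivAt (fun y => (b-y)^4/24 - (b-a)*(b-y)^3/36) (-((b-x)^2*(a+b-2*x)/12)) x := by
      intro x _
      have h := ((((hasDerivAt_id x).const_sub b).pow 4).div_const 24).sub
        (((((hasDerivAt_id x).const_sub b).pow 3).const_mul (b-a)).div_const 36)
      simp only [id_eq] at h; exact h.congr_deriv (by ring)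
    rw [intervalIntegral.integral_eq_sub_of_hasDerivAt h
      (by apply ContinuousOn.intervalIntegrable; fun_prop)]
    ring
  -- integrability facts
  have hiL : IntervalIntegrable (fun x => (x-a)^2*(a+b-2*x)/12 * F3 x) volume a m :=
    hi3L.continuousOn_mul (by fun_prop)
  have hiR : IntervalIntegrable (fun x => (b-x)^2*(a+b-2*x)/12 * F3 x) volume m b :=
    hi3R.continuousOn_mul (by fun_prop)
  have hiLb : IntervalIntegrable (fun x => (x-a)^2*(a+b-2*x)/12 * |F3 a|) volume a m := by
    apply Continuous.intervalIntegrable; fun_prop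
  have hiRb : IntervalIntegrable (fun x => -((b-x)^2*(a+b-2*x)/12) * |F3 b|) volume m b := by
    apply Continuous.intervalIntegrable; fun_prop
  -- the two bounds
  have boundL : |∫ x in a..m, (x-a)^2*(a+b-2*x)/12 * F3 x| ≤ (b-a)^4/1152 * |F3 a| := by
    calc |∫ x in a..m, (x-a)^2*(a+b-2*x)/12 * F3 x|
        ≤ ∫ x in a..m, |(x-a)^2*(a+b-2*x)/12 * F3 x| :=
          intervalIntegral.abs_integral_le_integral_abs ham.le
      _ ≤ ∫ x in a..m, (x-a)^2*(a+b-2*x)/12 * |F3 a| := by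
          apply intervalIntegral.integral_mono_on ham.le hiL.abs hiLb
          intro t ht
          rw [abs_mul, abs_of_nonneg (hKnnL t ht)]
          exact mul_le_mul_of_nonneg_left (hA t ht) (hKnnL t ht)
      _ = (∫ x in a..m, (x-a)^2*(a+b-2*x)/12) * |F3 a| := by
          rw [intervalIntegral.integral_mul_const]
      _ = (b-a)^4/1152 * |F3 a| := by rw [hvalL]
  have boundR : |∫ x in m..b, (b-x)^2*(a+b-2*x)/12 * F3 x| ≤ (b-a)^4/1152 * |F3 b| := by
    calc |∫ x in m..b, (b-x)^2*(a+b-2*x)/12 * F3 x|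
        ≤ ∫ x in m..b, |(b-x)^2*(a+b-2*x)/12 * F3 x| :=
          intervalIntegral.abs_integral_le_integral_abs hmb.le
      _ ≤ ∫ x in m..b, -((b-x)^2*(a+b-2*x)/12) * |F3 b| := by
          apply intervalIntegral.integral_mono_on hmb.le hiR.abs hiRb
          intro t ht
          rw [abs_mul, abs_of_nonpos (hKnpR t ht)]
          exact mul_le_mul_of_nonneg_left (hB t ht) (by linarith [hKnpR t ht])
      _ = (∫ x in m..b, -((b-x)^2*(a+b-2*x)/12)) * |F3 b| := by
          rw [intervalIntegral.integral_mul_const]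
      _ = (b-a)^4/1152 * |F3 b| := by rw [hvalR]
  calc |(∫ x in a..b, f x) - (b - a) / 6 * (f a + 4 * f m + f b)|
      = |(∫ x in a..m, (x-a)^2*(a+b-2*x)/12 * F3 x)
          + ∫ x in m..b, (b-x)^2*(a+b-2*x)/12 * F3 x| := by rw [key]
    _ ≤ |∫ x in a..m, (x-a)^2*(a+b-2*x)/12 * F3 x|
          + |∫ x in m..b, (b-x)^2*(a+b-2*x)/12 * F3 x| := abs_add_le _ _
    _ ≤ (b-a)^4/1152 * |F3 a| + (b-a)^4/1152 * |F3 b| := add_le_add boundL boundR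
    _ = (b-a)^4/1152 * (|F3 a| + |F3 b|) := by ring
end

section
/- Let f : [a,b] → ℝ be four times continuously differentiable on (a,b) with its fourth derivative f⁗ bounded on (a,b), and set ‖f⁗‖_∞ = sup_{t∈(a,b)} |f⁗(t)|. Then |∫_a^b f(x) dx − ((b−a)/3)·[ (f(a)+f(b))/2 + 2·f((a+b)/2) ]| ≤ (1/2880)·‖f⁗‖_∞·(b−a)^5. -/
open MeasureTheory Real Set

/-- Four-fold integration by parts against a quartic polynomial whose fourth
derivative is 1. -/
lemma simpson_ibp4 (f : ℝ → ℝ) (a b : ℝ) (hab : a < b)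
    (hf : ContDiffOn ℝ 4 f (Set.Icc a b))
    (c d : ℝ) (hac : a ≤ c) (hcd : c ≤ d) (hdb : d ≤ b)
    (P0 P1 P2 P3 : ℝ → ℝ)
    (h0 : ∀ t, HasDerivAt P0 (P1 t) t) (h1 : ∀ t, HasDerivAt P1 (P2 t) t)
    (h2 : ∀ t, HasDerivAt P2 (P3 t) t) (h3 : ∀ t, HasDerivAt P3 1 t) :
    ∫ t in c..d, P0 t * iteratedDerivWithin 4 f (Set.Icc a b) t
      = ((P0 d * iteratedDerivWithin 3 f (Set.Icc a b) d
          - P1 d * iteratedDerivWithin 2 f (Set.Icc a b) d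
          + P2 d * iteratedDerivWithin 1 f (Set.Icc a b) d
          - P3 d * f d)
        - (P0 c * iteratedDerivWithin 3 f (Set.Icc a b) c
          - P1 c * iteratedDerivWithin 2 f (Set.Icc a b) c
          + P2 c * iteratedDerivWithin 1 f (Set.Icc a b) c
          - P3 c * f c))
        + ∫ t in c..d, f t := by
  have hu : UniqueDiffOn ℝ (Set.Icc a b) := uniqueDiffOn_Icc hab
  set F : ℕ → ℝ → ℝ := fun k => iteratedDerivWithin k f (Set.Icc a b) with hF
  have hsub : Set.Icc c d ⊆ Set.Icc a b := Set.Icc_subset_Icc hac hdb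
  have hFc : ∀ k : ℕ, k ≤ 4 → ContinuousOn (F k) (Set.Icc a b) := by
    intro k hk
    exact hf.continuousOn_iteratedDerivWithin (by exact_mod_cast hk) hu
  have hFd : ∀ k : ℕ, k < 4 → ∀ t ∈ Set.Ioo a b, HasDerivAt (F k) (F (k+1) t) t := by
    intro k hk t ht
    have hdo : DifferentiableOn ℝ (F k) (Set.Icc a b) :=
      hf.differentiableOn_iteratedDerivWithin (by exact_mod_cast hk) hu
    have htm : t ∈ Set.Icc a b := Set.Ioo_subset_Icc_self ht
    have h1 : HasDerivWithinAt (F k) (derivWithin (F k) (Set.Icc a b) t) (Set.Icc a b) t :=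
      (hdo t htm).hasDerivWithinAt
    have h2 : F (k+1) t = derivWithin (F k) (Set.Icc a b) t :=
      congrFun iteratedDerivWithin_succ t
    rw [h2]
    exact h1.hasDerivAt (Icc_mem_nhds ht.1 ht.2)
  have hP0c : Continuous P0 := by
    exact continuous_iff_continuousAt.mpr fun t => (h0 t).continuousAt
  have hP1c : Continuous P1 := continuous_iff_continuousAt.mpr fun t => (h1 t).continuousAt
  have hP2c : Continuous P2 := continuous_iff_continuousAt.mpr fun t => (h2 t).continuousAt
  have hP3c : Continuous P3 := continuous_iff_continuousAt.mpr fun t => (h3 t).continuousAt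
  set G : ℝ → ℝ := fun t => P0 t * F 3 t - P1 t * F 2 t + P2 t * F 1 t - P3 t * F 0 t with hG
  have hGc : ContinuousOn G (Set.Icc c d) := by
    apply ContinuousOn.sub
    apply ContinuousOn.add
    apply ContinuousOn.sub
    · exact (hP0c.continuousOn).mul ((hFc 3 (by norm_num)).mono hsub)
    · exact (hP1c.continuousOn).mul ((hFc 2 (by norm_num)).mono hsub)
    · exact (hP2c.continuousOn).mul ((hFc 1 (by norm_num)).mono hsub)
    · exact (hP3c.continuousOn).mul ((hFc 0 (by norm_num)).mono hsub)
  have hGd : ∀ t ∈ Set.Ioo c d, HasDerivAt G (P0 t * F 4 t - F 0 t) t := by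
    intro t ht
    have ht' : t ∈ Set.Ioo a b := ⟨lt_of_le_of_lt hac ht.1, lt_of_lt_of_le ht.2 hdb⟩
    have e0 := ((h0 t).mul (hFd 3 (by norm_num) t ht'))
    have e1 := ((h1 t).mul (hFd 2 (by norm_num) t ht'))
    have e2 := ((h2 t).mul (hFd 1 (by norm_num) t ht'))
    have e3 := ((h3 t).mul (hFd 0 (by norm_num) t ht'))
    have := ((e0.sub e1).add e2).sub e3
    refine this.congr_deriv ?_
    ring
  have hcont : ContinuousOn (fun t => P0 t * F 4 t - F 0 t) (Set.Icc c d) := by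
    exact ((hP0c.continuousOn).mul ((hFc 4 le_rfl).mono hsub)).sub ((hFc 0 (by norm_num)).mono hsub)
  have hint : IntervalIntegrable (fun t => P0 t * F 4 t - F 0 t) volume c d := by
    apply ContinuousOn.intervalIntegrable
    rwa [Set.uIcc_of_le hcd]
  have key : ∫ t in c..d, (P0 t * F 4 t - F 0 t) = G d - G c :=
    intervalIntegral.integral_eq_sub_of_hasDerivAt_of_le hcd hGc hGd hint
  have hint1 : IntervalIntegrable (fun t => P0 t * F 4 t) volume c d := by
    apply ContinuousOn.intervalIntegrable
    rw [Set.uIcc_of_le hcd]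
    exact (hP0c.continuousOn).mul ((hFc 4 le_rfl).mono hsub)
  have hint2 : IntervalIntegrable (fun t => F 0 t) volume c d := by
    apply ContinuousOn.intervalIntegrable
    rw [Set.uIcc_of_le hcd]
    exact (hFc 0 (by norm_num)).mono hsub
  rw [intervalIntegral.integral_sub hint1 hint2] at key
  have hF0 : F 0 = f := iteratedDerivWithin_zero
  have hGdv : G d = P0 d * F 3 d - P1 d * F 2 d + P2 d * F 1 d - P3 d * f d := by
    rw [hG]; simp [hF0]
  have hGcv : G c = P0 c * F 3 c - P1 c * F 2 c + P2 c * F 1 c - P3 c * f c := by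
    rw [hG]; simp [hF0]
  have : ∫ t in c..d, F 0 t = ∫ t in c..d, f t := by rw [hF0]
  rw [this] at key
  rw [hGdv, hGcv] at key
  show (∫ t in c..d, P0 t * F 4 t)
      = ((P0 d * F 3 d - P1 d * F 2 d + P2 d * F 1 d - P3 d * f d)
        - (P0 c * F 3 c - P1 c * F 2 c + P2 c * F 1 c - P3 c * f c))
        + ∫ t in c..d, f t
  linarith [key]



lemma simpson_half_bound (a b c d : ℝ) (hac : a ≤ c) (hcd : c ≤ d) (hdb : d ≤ b)
    (g P0 A : ℝ → ℝ) (hg : ContinuousOn g (Set.Icc a b))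
    (hP0 : Continuous P0) (hneg : ∀ x ∈ Set.Ioo c d, P0 x ≤ 0)
    (M : ℝ) (hM : ∀ x ∈ Set.Ioo a b, |g x| ≤ M)
    (hA : ∀ t, HasDerivAt A (-(P0 t) * M) t) :
    |∫ x in c..d, P0 x * g x| ≤ A d - A c := by
  have hsub : Set.Ioo c d ⊆ Set.Icc a b := fun x hx =>
    ⟨le_trans hac (le_of_lt hx.1), le_trans (le_of_lt hx.2) hdb⟩
  have hint1 : IntegrableOn (fun x => |P0 x * g x|) (Set.Ioo c d) volume := by
    have : ContinuousOn (fun x => |P0 x * g x|) (Set.Icc a b) :=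
      ((hP0.continuousOn.mul hg)).abs
    exact (this.integrableOn_Icc).mono_set hsub
  have hint2 : IntegrableOn (fun x => -(P0 x) * M) (Set.Ioo c d) volume := by
    exact ((hP0.neg.mul continuous_const).integrableOn_Icc (a := c) (b := d)).mono_set
      Set.Ioo_subset_Icc_self
  have hmono : ∫ x in Set.Ioo c d, |P0 x * g x| ≤ ∫ x in Set.Ioo c d, -(P0 x) * M := by
    apply setIntegral_mono_on hint1 hint2 measurableSet_Ioo
    intro x hx
    have hx' : x ∈ Set.Ioo a b :=
      ⟨lt_of_le_of_lt hac hx.1, lt_of_lt_of_le hx.2 hdb⟩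
    have h1 : |P0 x| = -(P0 x) := abs_of_nonpos (hneg x hx)
    rw [abs_mul, h1]
    exact mul_le_mul_of_nonneg_left (hM x hx') (by linarith [hneg x hx])
  have habs : |∫ x in c..d, P0 x * g x| ≤ ∫ x in c..d, |P0 x * g x| :=
    intervalIntegral.abs_integral_le_integral_abs hcd
  have he1 : ∫ x in c..d, |P0 x * g x| = ∫ x in Set.Ioo c d, |P0 x * g x| := by
    rw [intervalIntegral.integral_of_le hcd, MeasureTheory.integral_Ioc_eq_integral_Ioo]
  have he2 : ∫ x in Set.Ioo c d, -(P0 x) * M = ∫ x in c..d, -(P0 x) * M := by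
    rw [intervalIntegral.integral_of_le hcd, MeasureTheory.integral_Ioc_eq_integral_Ioo]
  have hftc : ∫ x in c..d, -(P0 x) * M = A d - A c := by
    apply intervalIntegral.integral_eq_sub_of_hasDerivAt
    · intro x _; exact hA x
    · apply Continuous.intervalIntegrable
      exact hP0.neg.mul continuous_const
  calc |∫ x in c..d, P0 x * g x| ≤ ∫ x in c..d, |P0 x * g x| := habs
    _ = ∫ x in Set.Ioo c d, |P0 x * g x| := he1
    _ ≤ ∫ x in Set.Ioo c d, -(P0 x) * M := hmono
    _ = ∫ x in c..d, -(P0 x) * M := he2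
    _ = A d - A c := hftc



set_option maxHeartbeats 2000000 in
theorem classical_simpson_inequality (f : ℝ → ℝ) (a b : ℝ) (hab : a < b)
    (hf : ContDiffOn ℝ 4 f (Set.Icc a b))
    (hbdd : BddAbove
      ((fun t => |iteratedDerivWithin 4 f (Set.Icc a b) t|) '' Set.Ioo a b)) :
    |(∫ x in a..b, f x) -
        (b - a) / 3 * ((f a + f b) / 2 + 2 * f ((a + b) / 2))| ≤
      1 / 2880 *
        sSup ((fun t => |iteratedDerivWithin 4 f (Set.Icc a b) t|) '' Set.Ioo a b) *
        (b - a) ^ 5 := by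
  set m : ℝ := (a + b) / 2 with hm
  set M : ℝ := sSup ((fun t => |iteratedDerivWithin 4 f (Set.Icc a b) t|) '' Set.Ioo a b) with hMdef
  set F4 : ℝ → ℝ := iteratedDerivWithin 4 f (Set.Icc a b) with hF4
  have ham : a < m := by rw [hm]; linarith
  have hmb : m < b := by rw [hm]; linarith
  have hM : ∀ x ∈ Set.Ioo a b, |F4 x| ≤ M := fun x hx => le_csSup hbdd ⟨x, hx, rfl⟩
  have hM0 : 0 ≤ M := le_trans (abs_nonneg _) (hM m ⟨ham, hmb⟩)
  -- derivative chains for the two kernels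
  have hda : ∀ t : ℝ, HasDerivAt (fun t : ℝ => t - a) 1 t := fun t => (hasDerivAt_id t).sub_const a
  have hdb' : ∀ t : ℝ, HasDerivAt (fun t : ℝ => b - t) (-1) t := fun t => (hasDerivAt_id t).const_sub b
  have h0 : ∀ t : ℝ, HasDerivAt (fun t => (3*(t-a)^4 - 2*(b-a)*(t-a)^3)/72)
      ((2*(t-a)^3 - (b-a)*(t-a)^2)/12) t := by
    intro t
    have H := ((((hda t).pow 4).const_mul (3:ℝ)).sub (((hda t).pow 3).const_mul (2*(b-a)))).div_const 72
    refine H.congr_deriv ?_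
    push_cast; ring
  have h1 : ∀ t : ℝ, HasDerivAt (fun t => (2*(t-a)^3 - (b-a)*(t-a)^2)/12)
      ((3*(t-a)^2 - (b-a)*(t-a))/6) t := by
    intro t
    have H := ((((hda t).pow 3).const_mul (2:ℝ)).sub (((hda t).pow 2).const_mul (b-a))).div_const 12
    refine H.congr_deriv ?_
    push_cast; ring
  have h2 : ∀ t : ℝ, HasDerivAt (fun t => (3*(t-a)^2 - (b-a)*(t-a))/6)
      ((t-a) - (b-a)/6) t := by
    intro t
    have H := ((((hda t).pow 2).const_mul (3:ℝ)).sub ((hda t).const_mul (b-a))).div_const 6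
    refine H.congr_deriv ?_
    push_cast; ring
  have h3 : ∀ t : ℝ, HasDerivAt (fun t : ℝ => (t-a) - (b-a)/6) 1 t := by
    intro t
    simpa using (hda t).sub_const ((b-a)/6)
  have q0 : ∀ t : ℝ, HasDerivAt (fun t => (3*(b-t)^4 - 2*(b-a)*(b-t)^3)/72)
      (-((2*(b-t)^3 - (b-a)*(b-t)^2)/12)) t := by
    intro t
    have H := ((((hdb' t).pow 4).const_mul (3:ℝ)).sub (((hdb' t).pow 3).const_mul (2*(b-a)))).div_const 72
    refine H.congr_deriv ?_
    push_cast; ring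
  have q1 : ∀ t : ℝ, HasDerivAt (fun t => -((2*(b-t)^3 - (b-a)*(b-t)^2)/12))
      ((3*(b-t)^2 - (b-a)*(b-t))/6) t := by
    intro t
    have H := (((((hdb' t).pow 3).const_mul (2:ℝ)).sub (((hdb' t).pow 2).const_mul (b-a))).div_const 12).neg
    refine H.congr_deriv ?_
    push_cast; ring
  have q2 : ∀ t : ℝ, HasDerivAt (fun t => (3*(b-t)^2 - (b-a)*(b-t))/6)
      (-((b-t) - (b-a)/6)) t := by
    intro t
    have H := ((((hdb' t).pow 2).const_mul (3:ℝ)).sub ((hdb' t).const_mul (b-a))).div_const 6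
    refine H.congr_deriv ?_
    push_cast; ring
  have q3 : ∀ t : ℝ, HasDerivAt (fun t : ℝ => -((b-t) - (b-a)/6)) 1 t := by
    intro t
    have H := ((hdb' t).sub_const ((b-a)/6)).neg
    refine H.congr_deriv ?_
    norm_num
  -- the two integration-by-parts identities
  have HL := simpson_ibp4 f a b hab hf a m le_rfl ham.le hmb.le
    (fun t => (3*(t-a)^4 - 2*(b-a)*(t-a)^3)/72)
    (fun t => (2*(t-a)^3 - (b-a)*(t-a)^2)/12)
    (fun t => (3*(t-a)^2 - (b-a)*(t-a))/6)
    (fun t => (t-a) - (b-a)/6)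
    h0 h1 h2 h3
  have HR := simpson_ibp4 f a b hab hf m b ham.le hmb.le le_rfl
    (fun t => (3*(b-t)^4 - 2*(b-a)*(b-t)^3)/72)
    (fun t => -((2*(b-t)^3 - (b-a)*(b-t)^2)/12))
    (fun t => (3*(b-t)^2 - (b-a)*(b-t))/6)
    (fun t => -((b-t) - (b-a)/6))
    q0 q1 q2 q3
  -- additivity of the integral of f
  have hfc : ContinuousOn f (Set.Icc a b) := hf.continuousOn
  have hi1 : IntervalIntegrable f volume a m := by
    apply ContinuousOn.intervalIntegrable
    rw [Set.uIcc_of_le ham.le]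
    exact hfc.mono (Set.Icc_subset_Icc le_rfl hmb.le)
  have hi2 : IntervalIntegrable f volume m b := by
    apply ContinuousOn.intervalIntegrable
    rw [Set.uIcc_of_le hmb.le]
    exact hfc.mono (Set.Icc_subset_Icc ham.le le_rfl)
  have hadd : (∫ t in a..m, f t) + (∫ t in m..b, f t) = ∫ t in a..b, f t :=
    intervalIntegral.integral_add_adjacent_intervals hi1 hi2
  have hsum : ((∫ t in a..m, (3*(t-a)^4 - 2*(b-a)*(t-a)^3)/72 * F4 t)
        + (∫ t in m..b, (3*(b-t)^4 - 2*(b-a)*(b-t)^3)/72 * F4 t))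
      = (∫ x in a..b, f x) - (b - a) / 3 * ((f a + f b) / 2 + 2 * f m) := by
    rw [HL, HR]
    rw [hm]
    linear_combination hadd
  -- bounds on the two halves
  have hb1 : |∫ t in a..m, (3*(t-a)^4 - 2*(b-a)*(t-a)^3)/72 * F4 t|
      ≤ M*(b-a)^5/5760 := by
    have hA : ∀ t : ℝ, HasDerivAt (fun t => (2*(b-a)*(t-a)^4/4 - 3*(t-a)^5/5)/72 * M)
        (-((3*(t-a)^4 - 2*(b-a)*(t-a)^3)/72) * M) t := by
      intro t
      have H := (((((hda t).pow 4).const_mul (2*(b-a))).div_const 4 |>.sub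
        ((((hda t).pow 5).const_mul (3:ℝ)).div_const 5)).div_const 72).mul_const M
      refine H.congr_deriv ?_
      push_cast; ring
    have := simpson_half_bound a b a m le_rfl ham.le hmb.le F4
      (fun t => (3*(t-a)^4 - 2*(b-a)*(t-a)^3)/72)
      (fun t => (2*(b-a)*(t-a)^4/4 - 3*(t-a)^5/5)/72 * M)
      ((hf.continuousOn_iteratedDerivWithin (by norm_num) (uniqueDiffOn_Icc hab)))
      (by fun_prop)
      (by
        intro x hx
        have hs : 0 < x - a := by linarith [hx.1]
        have hs2 : x - a < (b-a)/2 := by rw [hm] at hx; linarith [hx.2]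
        have hkey : (x-a)^3 * (3*(x-a) - 2*(b-a)) ≤ 0 :=
          mul_nonpos_of_nonneg_of_nonpos (by positivity) (by linarith)
        nlinarith [hkey])
      M hM hA
    calc |∫ t in a..m, (3*(t-a)^4 - 2*(b-a)*(t-a)^3)/72 * F4 t|
        ≤ (2*(b-a)*(m-a)^4/4 - 3*(m-a)^5/5)/72 * M - (2*(b-a)*(a-a)^4/4 - 3*(a-a)^5/5)/72 * M := this
      _ = M*(b-a)^5/5760 := by rw [hm]; ring
  have hb2 : |∫ t in m..b, (3*(b-t)^4 - 2*(b-a)*(b-t)^3)/72 * F4 t|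
      ≤ M*(b-a)^5/5760 := by
    have hA : ∀ t : ℝ, HasDerivAt (fun t => (3*(b-t)^5/5 - 2*(b-a)*(b-t)^4/4)/72 * M)
        (-((3*(b-t)^4 - 2*(b-a)*(b-t)^3)/72) * M) t := by
      intro t
      have H := ((((((hdb' t).pow 5).const_mul (3:ℝ)).div_const 5 |>.sub
        ((((hdb' t).pow 4).const_mul (2*(b-a))).div_const 4)).div_const 72)).mul_const M
      refine H.congr_deriv ?_
      push_cast; ring
    have := simpson_half_bound a b m b ham.le hmb.le le_rfl F4
      (fun t => (3*(b-t)^4 - 2*(b-a)*(b-t)^3)/72)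
      (fun t => (3*(b-t)^5/5 - 2*(b-a)*(b-t)^4/4)/72 * M)
      ((hf.continuousOn_iteratedDerivWithin (by norm_num) (uniqueDiffOn_Icc hab)))
      (by fun_prop)
      (by
        intro x hx
        have hs : 0 < b - x := by linarith [hx.2]
        have hs2 : b - x < (b-a)/2 := by rw [hm] at hx; linarith [hx.1]
        have hkey : (b-x)^3 * (3*(b-x) - 2*(b-a)) ≤ 0 :=
          mul_nonpos_of_nonneg_of_nonpos (by positivity) (by linarith)
        nlinarith [hkey])
      M hM hA
    calc |∫ t in m..b, (3*(b-t)^4 - 2*(b-a)*(b-t)^3)/72 * F4 t|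
        ≤ (3*(b-b)^5/5 - 2*(b-a)*(b-b)^4/4)/72 * M - (3*(b-m)^5/5 - 2*(b-a)*(b-m)^4/4)/72 * M := this
      _ = M*(b-a)^5/5760 := by rw [hm]; ring
  rw [← hsum]
  calc |((∫ t in a..m, (3*(t-a)^4 - 2*(b-a)*(t-a)^3)/72 * F4 t)
        + (∫ t in m..b, (3*(b-t)^4 - 2*(b-a)*(b-t)^3)/72 * F4 t))|
      ≤ |∫ t in a..m, (3*(t-a)^4 - 2*(b-a)*(t-a)^3)/72 * F4 t|
        + |∫ t in m..b, (3*(b-t)^4 - 2*(b-a)*(b-t)^3)/72 * F4 t| := abs_add_le _ _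
    _ ≤ M*(b-a)^5/5760 + M*(b-a)^5/5760 := add_le_add hb1 hb2
    _ = 1/2880 * M * (b-a)^5 := by ring
end
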